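/- For all natural numbers n and k, the identity ((2n−1)!!/2) · binom(k−1/2, 2n) = ((−1)^k · 2^{n−k} · Γ(k+1/2) / (2π)^{3/2}) · Γ(n − k/2 + 1/4) · Γ(n − k/2 + 3/4) / n! holds, where binom(k−1/2, 2n) is the generalized binomial coefficient. -/

import Mathlib

/-- `dfac m` is the odd double factorial `(2m-1)!! = (2m)!/(2^m m!)` as a real number. -/
noncomputable def dfac (m : ℕ) : ℝ := ((2 * m).factorial : ℝ) / (2 ^ m * (m.factorial : ℝ))

/-- The generalized binomial coefficient `binom(x, m) = (1/m!)·∏_{j=0}^{m-1}(x-j)`. -/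
noncomputable def genBinom (x : ℝ) (m : ℕ) : ℝ :=
  (∏ j ∈ Finset.range m, (x - (j : ℝ))) / (m.factorial : ℝ)

open Real Finset

lemma half_ne_int (a b : ℤ) : (a : ℝ) + 1/2 ≠ (b : ℝ) := by
  intro h
  have h2 : ((2*a+1 : ℤ) : ℝ) = ((2*b : ℤ) : ℝ) := by push_cast; linarith
  have := Int.cast_injective (α := ℝ) h2
  omega

lemma gamma_prod (x : ℝ) (hx : ∀ j : ℕ, x - (j:ℝ) ≠ 0) (m : ℕ) :
    Real.Gamma (x + 1) = (∏ j ∈ Finset.range m, (x - (j:ℝ))) * Real.Gamma (x + 1 - m) := by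
  induction m with
  | zero => simp
  | succ m ih =>
    have h : x + 1 - (m:ℝ) = (x - m) + 1 := by push_cast; ring
    have h2 : x + 1 - ((m:ℕ)+1 : ℕ) = x - m := by push_cast; ring
    rw [ih, Finset.prod_range_succ, h, Real.Gamma_add_one (hx m), h2, mul_assoc]


lemma sin_shift (n k : ℕ) : Real.sin (π * ((k:ℝ) + 1/2 - 2*n)) = (-1)^k := by
  have h : π * ((k:ℝ) + 1/2 - 2*n) = (0 + ((k:ℤ) - 2*n : ℤ) * π) + π/2 := by push_cast; ring
  rw [h, Real.sin_add_pi_div_two, Real.cos_add_int_mul_pi, Real.cos_zero, mul_one,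
    zpow_sub₀ (by norm_num : (-1:ℝ) ≠ 0)]
  have h1 : ((-1:ℝ))^(2*(n:ℤ)) = 1 := by rw [zpow_mul]; norm_num
  rw [h1, div_one, zpow_natCast]

/-- For all `n k : ℕ`,
`((2n-1)!!/2)·binom(k-1/2, 2n)
  = ((-1)^k 2^{n-k} Γ(k+1/2)/(2π)^{3/2}) · Γ(n-k/2+1/4) Γ(n-k/2+3/4) / n!`. -/
theorem stmt4 (n k : ℕ) :
    dfac n / 2 * genBinom ((k : ℝ) - 1 / 2) (2 * n)
      = (-1 : ℝ) ^ k * (2 : ℝ) ^ ((n : ℤ) - (k : ℤ)) * Real.Gamma ((k : ℝ) + 1 / 2) /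
            (2 * Real.pi) ^ ((3 : ℝ) / 2) *
          Real.Gamma ((n : ℝ) - (k : ℝ) / 2 + 1 / 4) *
          Real.Gamma ((n : ℝ) - (k : ℝ) / 2 + 3 / 4) / (n.factorial : ℝ) := by
  have hx : ∀ j : ℕ, (k:ℝ) - 1/2 - (j:ℝ) ≠ 0 := by
    intro j h
    exact half_ne_int ((k:ℤ) - 1 - j) 0 (by push_cast; linarith)
  have hprod := gamma_prod ((k:ℝ) - 1/2) hx (2*n)
  rw [show (k:ℝ)-1/2+1-((2*n:ℕ):ℝ) = (k:ℝ)+1/2-2*(n:ℝ) by push_cast; ring,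
    show (k:ℝ)-1/2+1 = (k:ℝ)+1/2 by ring] at hprod
  have hB : Real.Gamma ((k:ℝ)+1/2-2*(n:ℝ)) ≠ 0 := by
    refine Real.Gamma_ne_zero fun m h => half_ne_int ((k:ℤ)-2*n) (-m) ?_
    push_cast at h ⊢; linarith
  have hNk : (-1:ℝ)^k * (-1:ℝ)^k = 1 := by
    rw [← pow_add, ← two_mul, pow_mul]; norm_num
  have hBE : Real.Gamma ((k:ℝ)+1/2-2*(n:ℝ)) * Real.Gamma (1 - ((k:ℝ)+1/2-2*(n:ℝ)))
      = π * (-1:ℝ)^k := by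
    rw [Real.Gamma_mul_Gamma_one_sub, sin_shift n k, div_eq_mul_inv, ← inv_pow]
    norm_num
  have hdup : Real.Gamma ((n:ℝ) - (k:ℝ)/2 + 1/4) * Real.Gamma ((n:ℝ) - (k:ℝ)/2 + 3/4)
      = Real.Gamma (1 - ((k:ℝ)+1/2-2*(n:ℝ))) *
        (2:ℝ) ^ ((1:ℝ) - 2*((n:ℝ) - (k:ℝ)/2 + 1/4)) * √π := by
    rw [show (n:ℝ) - (k:ℝ)/2 + 3/4 = ((n:ℝ) - (k:ℝ)/2 + 1/4) + 1/2 by ring,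
      Real.Gamma_mul_Gamma_add_half,
      show 2*((n:ℝ) - (k:ℝ)/2 + 1/4) = 1 - ((k:ℝ)+1/2-2*(n:ℝ)) by ring]
  have hz : (2:ℝ)^((n:ℤ)-(k:ℤ)) = (2:ℝ) ^ ((n:ℝ)-(k:ℝ)) := by
    rw [← Real.rpow_intCast 2 ((n:ℤ)-(k:ℤ))]; norm_num
  have hpow : (2:ℝ)^((n:ℝ)-(k:ℝ)) * (2:ℝ)^((1:ℝ)-2*((n:ℝ)-(k:ℝ)/2+1/4)) * (√π * π)
      = (2:ℝ)^(-(n:ℝ)-1) * (2*π)^((3:ℝ)/2) := by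
    have h2 : ((n:ℝ)-(k:ℝ)) + ((1:ℝ)-2*((n:ℝ)-(k:ℝ)/2+1/4)) = (-(n:ℝ)-1) + 3/2 := by ring
    have h3 : √π * π = π^((3:ℝ)/2) := by
      rw [Real.sqrt_eq_rpow]
      nth_rewrite 2 [← Real.rpow_one π]
      rw [← Real.rpow_add pi_pos]; norm_num
    rw [← Real.rpow_add two_pos, h2, Real.rpow_add two_pos, h3,
      Real.mul_rpow two_pos.le pi_pos.le]
    ring
  have key2 : (-1:ℝ)^k * (2:ℝ)^((n:ℤ)-(k:ℤ)) *
      (Real.Gamma ((n:ℝ) - (k:ℝ)/2 + 1/4) * Real.Gamma ((n:ℝ) - (k:ℝ)/2 + 3/4)) *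
      Real.Gamma ((k:ℝ)+1/2-2*(n:ℝ))
      = (2:ℝ)^(-(n:ℝ)-1) * (2*π)^((3:ℝ)/2) := by
    rw [hdup, hz]
    linear_combination ((-1:ℝ)^k * (2:ℝ)^((n:ℝ)-(k:ℝ)) *
        (2:ℝ)^((1:ℝ)-2*((n:ℝ)-(k:ℝ)/2+1/4)) * √π) * hBE
      + ((2:ℝ)^((n:ℝ)-(k:ℝ)) * (2:ℝ)^((1:ℝ)-2*((n:ℝ)-(k:ℝ)/2+1/4)) * √π * π) * hNk
      + hpow
  have hR : (2:ℝ)^(-(n:ℝ)-1) = ((2:ℝ)^(n+1))⁻¹ := by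
    have h := Real.rpow_intCast (2:ℝ) (-((n:ℕ)+1:ℕ) : ℤ)
    push_cast at h
    rw [show -(n:ℝ)-1 = -((n:ℝ)+1) by ring, h, zpow_neg]; norm_cast
  have hW : ((2:ℝ)*π) ^ ((3:ℝ)/2) ≠ 0 := by positivity
  have hfn : ((n.factorial : ℝ)) ≠ 0 := Nat.cast_ne_zero.mpr n.factorial_ne_zero
  have hf2n : (((2*n).factorial : ℝ)) ≠ 0 := Nat.cast_ne_zero.mpr (2*n).factorial_ne_zero
  rw [dfac, genBinom, hprod]
  set P := ∏ j ∈ Finset.range (2*n), ((k:ℝ) - 1/2 - (j:ℝ)) with hPdef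
  set B := Real.Gamma ((k:ℝ)+1/2-2*(n:ℝ)) with hBdef
  set C := Real.Gamma ((n:ℝ)-(k:ℝ)/2+1/4) with hCdef
  set D := Real.Gamma ((n:ℝ)-(k:ℝ)/2+3/4) with hDdef
  set Z := (2:ℝ)^((n:ℤ)-(k:ℤ)) with hZdef
  set W := ((2:ℝ)*π)^((3:ℝ)/2) with hWdef
  set R := (2:ℝ)^(-(n:ℝ)-1) with hRdef
  have hR2 : R * ((2:ℝ)^n * 2) = 1 := by
    rw [hR, pow_succ]
    field_simp
  field_simp
  linear_combination (-(P * (2:ℝ)^n * 2)) * key2 + (-(P * W)) * hR2
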